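/- Let {u, v} be a non-tree edge of G with dep(u) ≥ dep(v), and let w be the LCA of (u, v). Then there is a simple cycle in G of length dep(u) + dep(v) − 2·dep(w) + 1 (in particular of length at most 2·dep(p) + 1) that contains the edges {u, v} and {u, p(u)}; moreover, if v ≠ w, it also contains the edge {v, p(v)}. -/

import Mathlib

open Function

/-- `u` is an ancestor of `v` in the rooted forest given by parent pointers `p`. -/
def IsAncestor {V : Type} (p : V → V) (u v : V) : Prop := ∃ i : ℕ, p^[i] v = u

/-- The depth of `v`: the least `i` with `p^[i+1] v = p^[i] v`. -/
noncomputable def dep {V : Type} (p : V → V) (v : V) : ℕ :=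
  sInf {i : ℕ | p^[i + 1] v = p^[i] v}

/-- The depth of the rooted tree `p`. -/
noncomputable def treeDep {V : Type} [Fintype V] (p : V → V) : ℕ :=
  Finset.univ.sup (dep p)

/-- `w` is the lowest common ancestor of `(u, v)`: a common ancestor of maximal depth. -/
def IsLCA {V : Type} (p : V → V) (u v w : V) : Prop :=
  IsAncestor p w u ∧ IsAncestor p w v ∧
    ∀ x, IsAncestor p x u → IsAncestor p x v → dep p x ≤ dep p w

section Aux

variable {V : Type} {p : V → V} {r : V}

lemma dep_le_iff (hstab : ∀ v : V, ∃ i : ℕ, p^[i + 1] v = p^[i] v) (v : V) (i : ℕ) :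
    dep p v ≤ i ↔ p^[i + 1] v = p^[i] v := by
  constructor
  · intro h
    have key : ∀ k, p^[dep p v + k + 1] v = p^[dep p v + k] v := by
      intro k
      induction k with
      | zero => exact Nat.sInf_mem (hstab v)
      | succ k ih =>
        have h2 : p^[dep p v + k + 1 + 1] v = p^[dep p v + k + 1] v := by
          have h3 := congrArg p ih
          rw [← Function.iterate_succ_apply' p (dep p v + k + 1) v,
            ← Function.iterate_succ_apply' p (dep p v + k) v] at h3
          exact h3
        exact h2
    have h3 := key (i - dep p v)
    rwa [Nat.add_sub_cancel' h] at h3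
  · intro h; exact Nat.sInf_le h

lemma dep_eq_zero_iff (hstab : ∀ v : V, ∃ i : ℕ, p^[i + 1] v = p^[i] v)
    (hr : p r = r) (hroot : ∀ v : V, p v = v → v = r) (v : V) :
    dep p v = 0 ↔ v = r := by
  constructor
  · intro h
    have := (dep_le_iff hstab v 0).mp (by omega)
    simp only [Function.iterate_one, Function.iterate_zero, id_eq] at this
    exact hroot v this
  · intro h
    have := (dep_le_iff hstab v 0).mpr (by simp [h, hr])
    omega

lemma dep_iterate (hstab : ∀ v : V, ∃ i : ℕ, p^[i + 1] v = p^[i] v)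
    (v : V) (i : ℕ) (h : i ≤ dep p v) :
    dep p (p^[i] v) = dep p v - i := by
  apply le_antisymm
  · apply (dep_le_iff hstab _ _).mpr
    rw [← Function.iterate_add_apply, ← Function.iterate_add_apply]
    have e1 : dep p v - i + 1 + i = dep p v + 1 := by omega
    have e2 : dep p v - i + i = dep p v := by omega
    rw [e1, e2]
    exact (dep_le_iff hstab v (dep p v)).mp le_rfl
  · have h2 := (dep_le_iff hstab (p^[i] v) (dep p (p^[i] v))).mp le_rfl
    rw [← Function.iterate_add_apply, ← Function.iterate_add_apply] at h2
    have e1 : dep p (p^[i] v) + 1 + i = dep p (p^[i] v) + i + 1 := by omega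
    rw [e1] at h2
    have h3 := (dep_le_iff hstab v _).mpr h2
    omega

lemma iterate_inj (hstab : ∀ v : V, ∃ i : ℕ, p^[i + 1] v = p^[i] v)
    (v : V) (i j : ℕ) (hi : i ≤ dep p v) (hj : j ≤ dep p v)
    (h : p^[i] v = p^[j] v) : i = j := by
  have h1 := dep_iterate hstab v i hi
  have h2 := dep_iterate hstab v j hj
  rw [h] at h1
  omega

lemma iterate_stable (hstab : ∀ v : V, ∃ i : ℕ, p^[i + 1] v = p^[i] v)
    (v : V) (i : ℕ) (h : dep p v ≤ i) : p^[i] v = p^[dep p v] v := by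
  induction i with
  | zero =>
    have : dep p v = 0 := by omega
    rw [this]
  | succ i ih =>
    rcases Nat.lt_or_ge (dep p v) (i + 1) with h1 | h2
    · have hd : dep p v ≤ i := by omega
      rw [← ih hd]
      exact (dep_le_iff hstab v i).mp hd
    · have : dep p v = i + 1 := le_antisymm h h2
      rw [this]

lemma iterate_dep_eq_root (hstab : ∀ v : V, ∃ i : ℕ, p^[i + 1] v = p^[i] v)
    (hroot : ∀ v : V, p v = v → v = r) (v : V) : p^[dep p v] v = r := by
  have h := (dep_le_iff hstab v (dep p v)).mp le_rfl
  rw [Function.iterate_succ_apply'] at h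
  exact hroot _ h

lemma ancestor_spec (hstab : ∀ v : V, ∃ i : ℕ, p^[i + 1] v = p^[i] v)
    (hr : p r = r) (hroot : ∀ v : V, p v = v → v = r)
    {w v : V} (h : IsAncestor p w v) :
    dep p w ≤ dep p v ∧ p^[dep p v - dep p w] v = w := by
  obtain ⟨i, hi⟩ := h
  rcases le_or_gt i (dep p v) with h1 | h1
  · have hd : dep p w = dep p v - i := by rw [← hi]; exact dep_iterate hstab v i h1
    constructor
    · omega
    · have : dep p v - dep p w = i := by omega
      rw [this]; exact hi
  · have hw : w = r := by
      rw [← hi, iterate_stable hstab v i (by omega), iterate_dep_eq_root hstab hroot]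
    have hd : dep p w = 0 := by
      rw [hw]; exact (dep_eq_zero_iff hstab hr hroot _).mpr rfl
    rw [hd, Nat.sub_zero, hw]
    exact ⟨Nat.zero_le _, iterate_dep_eq_root hstab hroot v⟩

/-- Walk obtained by following parent pointers `n` steps. -/
def ascend {V : Type} (G : SimpleGraph V) (p : V → V) (r : V)
    (hspan : ∀ v : V, v ≠ r → G.Adj v (p v)) :
    (n : ℕ) → (v : V) → (∀ i, i < n → p^[i] v ≠ r) → G.Walk v (p^[n] v)
  | 0, _, _ => SimpleGraph.Walk.nil
  | (n + 1), v, h =>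
    SimpleGraph.Walk.cons (hspan v (by simpa using h 0 (Nat.succ_pos n)))
      ((ascend G p r hspan n (p v) (fun i hi => by
          rw [← Function.iterate_succ_apply]
          exact h (i + 1) (by omega))).copy rfl
        (Function.iterate_succ_apply p n v).symm)

lemma ascend_support {V : Type} (G : SimpleGraph V) (p : V → V) (r : V)
    (hspan : ∀ v : V, v ≠ r → G.Adj v (p v)) :
    ∀ (n : ℕ) (v : V) (h : ∀ i, i < n → p^[i] v ≠ r),
      (ascend G p r hspan n v h).support = (List.range (n + 1)).map (fun i => p^[i] v)
  | 0, v, h => by simp [ascend]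
  | (n + 1), v, h => by
    rw [ascend, SimpleGraph.Walk.support_cons, SimpleGraph.Walk.support_copy,
      ascend_support G p r hspan n (p v) _, List.range_succ_eq_map (n := n + 1),
      List.map_cons]
    simp only [Function.iterate_zero, id_eq, List.map_map]
    congr 1

lemma ascend_edges {V : Type} (G : SimpleGraph V) (p : V → V) (r : V)
    (hspan : ∀ v : V, v ≠ r → G.Adj v (p v)) :
    ∀ (n : ℕ) (v : V) (h : ∀ i, i < n → p^[i] v ≠ r),
      (ascend G p r hspan n v h).edges
        = (List.range n).map (fun i => s(p^[i] v, p^[i + 1] v))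
  | 0, v, h => by simp [ascend]
  | (n + 1), v, h => by
    rw [ascend, SimpleGraph.Walk.edges_cons, SimpleGraph.Walk.edges_copy,
      ascend_edges G p r hspan n (p v) _, List.range_succ_eq_map (n := n),
      List.map_cons]
    simp only [Function.iterate_zero, Function.iterate_one, id_eq, List.map_map,
      zero_add]
    congr 1

lemma ascend_length {V : Type} (G : SimpleGraph V) (p : V → V) (r : V)
    (hspan : ∀ v : V, v ≠ r → G.Adj v (p v)) :
    ∀ (n : ℕ) (v : V) (h : ∀ i, i < n → p^[i] v ≠ r),
      (ascend G p r hspan n v h).length = n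
  | 0, v, h => by simp [ascend]
  | (n + 1), v, h => by
    rw [ascend, SimpleGraph.Walk.length_cons, SimpleGraph.Walk.length_copy,
      ascend_length G p r hspan n (p v) _]

end Aux


theorem stmt4 {V : Type} [Fintype V] [DecidableEq V]
    (G : SimpleGraph V) (p : V → V) (r : V)
    (hG : G.Connected) (hcard : 2 ≤ Fintype.card V)
    (hstab : ∀ v : V, ∃ i : ℕ, p^[i + 1] v = p^[i] v)
    (hr : p r = r) (hroot : ∀ v : V, p v = v → v = r)
    (hspan : ∀ v : V, v ≠ r → G.Adj v (p v))
    (u v w : V) (huv : G.Adj u v) (hnt1 : p u ≠ v) (hnt2 : p v ≠ u)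
    (hdep : dep p v ≤ dep p u) (hlca : IsLCA p u v w) :
    ∃ (x : V) (c : G.Walk x x), c.IsCycle ∧
      c.length = dep p u + dep p v - 2 * dep p w + 1 ∧
      c.length ≤ 2 * treeDep p + 1 ∧
      s(u, v) ∈ c.edges ∧ s(u, p u) ∈ c.edges ∧
      (v ≠ w → s(v, p v) ∈ c.edges) := by
  obtain ⟨hwu, hwv, hmax⟩ := hlca
  obtain ⟨hwu_le, hau⟩ := ancestor_spec hstab hr hroot hwu
  obtain ⟨hwv_le, hav⟩ := ancestor_spec hstab hr hroot hwv
  set a := dep p u - dep p w with ha_def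
  set b := dep p v - dep p w with hb_def
  have ha_le : a ≤ dep p u := by omega
  have hb_le : b ≤ dep p v := by omega
  have hne : u ≠ v := huv.ne
  -- non-root along the paths
  have h1 : ∀ i, i < a → p^[i] u ≠ r := by
    intro i hi hc
    have : dep p (p^[i] u) = dep p u - i := dep_iterate hstab u i (by omega)
    rw [hc, (dep_eq_zero_iff hstab hr hroot r).mpr rfl] at this
    omega
  have h2 : ∀ i, i < b → p^[i] v ≠ r := by
    intro i hi hc
    have : dep p (p^[i] v) = dep p v - i := dep_iterate hstab v i (by omega)
    rw [hc, (dep_eq_zero_iff hstab hr hroot r).mpr rfl] at this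
    omega
  -- a ≥ 1
  have ha1 : 1 ≤ a := by
    by_contra h
    have ha0 : a = 0 := by omega
    rw [ha0] at hau
    simp only [Function.iterate_zero, id_eq] at hau
    -- u = w, so u is an ancestor of v
    have huv' : IsAncestor p u v := by rw [hau]; exact hwv
    have huw : dep p u ≤ dep p v := (ancestor_spec hstab hr hroot huv').1
    have hb0 : b = 0 := by omega
    rw [hb0] at hav
    simp only [Function.iterate_zero, id_eq] at hav
    exact hne (hau.trans hav.symm)
  -- key disjointness
  have hkey : ∀ i, i < a → ∀ j, j ≤ b → p^[i] u ≠ p^[j] v := by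
    intro i hi j hj heq
    have hx1 : IsAncestor p (p^[i] u) u := ⟨i, rfl⟩
    have hx2 : IsAncestor p (p^[i] u) v := ⟨j, heq.symm⟩
    have hle := hmax _ hx1 hx2
    have hdi : dep p (p^[i] u) = dep p u - i := dep_iterate hstab u i (by omega)
    omega
  -- the walks
  set W1 : G.Walk u w := (ascend G p r hspan a u h1).copy rfl hau with hW1_def
  set W2 : G.Walk v w := (ascend G p r hspan b v h2).copy rfl hav with hW2_def
  have hW1sup : W1.support = (List.range (a + 1)).map (fun i => p^[i] u) := by
    rw [hW1_def, SimpleGraph.Walk.support_copy, ascend_support]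
  have hW2sup : W2.support = (List.range (b + 1)).map (fun i => p^[i] v) := by
    rw [hW2_def, SimpleGraph.Walk.support_copy, ascend_support]
  have hW1e : W1.edges = (List.range a).map (fun i => s(p^[i] u, p^[i + 1] u)) := by
    rw [hW1_def, SimpleGraph.Walk.edges_copy, ascend_edges]
  have hW2e : W2.edges = (List.range b).map (fun i => s(p^[i] v, p^[i + 1] v)) := by
    rw [hW2_def, SimpleGraph.Walk.edges_copy, ascend_edges]
  have hW1len : W1.length = a := by
    rw [hW1_def, SimpleGraph.Walk.length_copy, ascend_length]
  have hW2len : W2.length = b := by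
    rw [hW2_def, SimpleGraph.Walk.length_copy, ascend_length]
  set P : G.Walk v u := W2.append W1.reverse with hP_def
  -- P is a path
  have hPpath : P.IsPath := by
    rw [SimpleGraph.Walk.isPath_def, hP_def, SimpleGraph.Walk.support_append,
      SimpleGraph.Walk.support_reverse, List.tail_reverse, hW1sup, hW2sup]
    have hdl : ((List.range (a + 1)).map (fun i => p^[i] u)).dropLast
        = (List.range a).map (fun i => p^[i] u) := by
      rw [List.range_succ, List.map_append]
      simp
    rw [hdl, List.nodup_append]
    refine ⟨?_, ?_, ?_⟩
    · apply List.Nodup.map_on _ List.nodup_range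
      intro x hx y hy hxy
      rw [List.mem_range] at hx hy
      exact iterate_inj hstab v x y (by omega) (by omega) hxy
    · rw [List.nodup_reverse]
      apply List.Nodup.map_on _ List.nodup_range
      intro x hx y hy hxy
      rw [List.mem_range] at hx hy
      exact iterate_inj hstab u x y (by omega) (by omega) hxy
    · intro x hx y hy hxy
      subst hxy
      rw [List.mem_map] at hx
      rw [List.mem_reverse, List.mem_map] at hy
      obtain ⟨j, hj, hjx⟩ := hx
      obtain ⟨i, hi, hix⟩ := hy
      rw [List.mem_range] at hj hi
      exact hkey i hi j (by omega) (hix.trans hjx.symm)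
  -- s(u,v) not among P's edges
  have hPno : s(u, v) ∉ P.edges := by
    rw [hP_def, SimpleGraph.Walk.edges_append, SimpleGraph.Walk.edges_reverse,
      hW1e, hW2e]
    intro hmem
    rw [List.mem_append, List.mem_reverse] at hmem
    rcases hmem with hmem | hmem
    · rw [List.mem_map] at hmem
      obtain ⟨j, hj, hje⟩ := hmem
      rw [List.mem_range] at hj
      rw [Sym2.eq_iff] at hje
      rcases hje with ⟨he1, he2⟩ | ⟨he1, he2⟩
      · -- p^[j] v = u, p^[j+1] v = v
        have : j + 1 = 0 := iterate_inj hstab v (j + 1) 0 (by omega) (by omega)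
          (by simpa using he2)
        omega
      · -- p^[j] v = v, p^[j+1] v = u
        have hj0 : j = 0 := iterate_inj hstab v j 0 (by omega) (by omega)
          (by simpa using he1)
        rw [hj0] at he2
        simp only [Function.iterate_one, zero_add] at he2
        exact hnt2 he2
    · rw [List.mem_map] at hmem
      obtain ⟨i, hi, hie⟩ := hmem
      rw [List.mem_range] at hi
      rw [Sym2.eq_iff] at hie
      rcases hie with ⟨he1, he2⟩ | ⟨he1, he2⟩
      · -- p^[i] u = u, p^[i+1] u = v
        have hi0 : i = 0 := iterate_inj hstab u i 0 (by omega) (by omega)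
          (by simpa using he1)
        rw [hi0] at he2
        simp only [Function.iterate_one, zero_add] at he2
        exact hnt1 he2
      · -- p^[i] u = v, p^[i+1] u = u
        have : i + 1 = 0 := iterate_inj hstab u (i + 1) 0 (by omega) (by omega)
          (by simpa using he2)
        omega
  refine ⟨u, SimpleGraph.Walk.cons huv P, ?_, ?_, ?_, ?_, ?_, ?_⟩
  · exact (SimpleGraph.Walk.cons_isCycle_iff P huv).mpr ⟨hPpath, hPno⟩
  · rw [SimpleGraph.Walk.length_cons, hP_def, SimpleGraph.Walk.length_append,
      SimpleGraph.Walk.length_reverse, hW1len, hW2len]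
    omega
  · rw [SimpleGraph.Walk.length_cons, hP_def, SimpleGraph.Walk.length_append,
      SimpleGraph.Walk.length_reverse, hW1len, hW2len]
    have hu_le : dep p u ≤ treeDep p := Finset.le_sup (Finset.mem_univ u)
    have hv_le : dep p v ≤ treeDep p := Finset.le_sup (Finset.mem_univ v)
    omega
  · simp
  · rw [SimpleGraph.Walk.edges_cons]
    apply List.mem_cons_of_mem
    rw [hP_def, SimpleGraph.Walk.edges_append, List.mem_append]
    right
    rw [SimpleGraph.Walk.edges_reverse, List.mem_reverse, hW1e, List.mem_map]
    exact ⟨0, List.mem_range.mpr (by omega), by simp⟩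
  · intro hvw
    have hb1 : 1 ≤ b := by
      by_contra h
      have hb0 : b = 0 := by omega
      rw [hb0] at hav
      simp only [Function.iterate_zero, id_eq] at hav
      exact hvw hav
    rw [SimpleGraph.Walk.edges_cons]
    apply List.mem_cons_of_mem
    rw [hP_def, SimpleGraph.Walk.edges_append, List.mem_append]
    left
    rw [hW2e, List.mem_map]
    exact ⟨0, List.mem_range.mpr (by omega), by simp⟩
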